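/- (Claim 4, forward direction, labeling part 1) If P is a popular matching leaving exactly U uncovered, then every edge of G incident to a vertex u ∈ U is labeled (+,−) with respect to P, with the + at u; equivalently, no edge incident to an unmatched vertex blocks P, and the matched endpoint of such an edge strictly prefers its P-partner. -/

import Mathlib

/-- A roommates instance: a simple graph together with, for each vertex,
a ranking of vertices (lower rank = more preferred), injective on neighbors. -/
structure Roommates (V : Type*) where
  G : SimpleGraph V
  rank : V → V → ℕ
  rank_inj : ∀ u a b, G.Adj u a → G.Adj u b → rank u a = rank u b → a = b

variable {V : Type*}

/-- `M` encodes a matching: `M u = some v` means `u` is matched to `v`. -/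
def IsMatching (R : Roommates V) (M : V → Option V) : Prop :=
  ∀ u v, M u = some v → R.G.Adj u v ∧ M v = some u

/-- Vertex `v` prefers matching `M` to matching `M'`. -/
def Prefers (R : Roommates V) (M M' : V → Option V) (v : V) : Prop :=
  (∃ w, M v = some w ∧ M' v = none) ∨
  (∃ w w', M v = some w ∧ M' v = some w' ∧ R.rank v w < R.rank v w')

/-- `M` is popular: it never loses a head-to-head election. -/
def Popular [Fintype V] (R : Roommates V) (M : V → Option V) : Prop :=
  ∀ M', IsMatching R M' →
    {v | Prefers R M' M v}.ncard ≤ {v | Prefers R M M' v}.ncard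

/-- Edge `(u,v)` blocks `M`: each endpoint is unmatched or prefers the other
endpoint to its partner. -/
def Blocks (R : Roommates V) (M : V → Option V) (u v : V) : Prop :=
  R.G.Adj u v ∧ M u ≠ some v ∧
  (∀ w, M u = some w → R.rank u v < R.rank u w) ∧
  (∀ w, M v = some w → R.rank v u < R.rank v w)

def IsStable (R : Roommates V) (M : V → Option V) : Prop :=
  ∀ u v, ¬ Blocks R M u v

/-- `u` votes `+` for `v` against its situation in `M`
(true when `u` is unmatched or prefers `v` to its `M`-partner). -/
def VotePlus (R : Roommates V) (M : V → Option V) (u v : V) : Prop :=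
  ∀ w, M u = some w → R.rank u v < R.rank u w

/-- Non-matching edge of `G_M`, i.e. not labeled `(−,−)`. -/
def NonMatchEdge (R : Roommates V) (M : V → Option V) (u v : V) : Prop :=
  R.G.Adj u v ∧ M u ≠ some v ∧ (VotePlus R M u v ∨ VotePlus R M v u)

/-- `AltList A M b l`: the list of vertices `l` forms an alternating sequence,
whose first edge is a matching edge if `b = true` and an allowed (`A`)
non-matching edge if `b = false`. -/
def AltList (A : V → V → Prop) (M : V → Option V) : Bool → List V → Prop
  | _, [] => True
  | _, [_] => True
  | true, u :: v :: rest => M u = some v ∧ AltList A M false (v :: rest)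
  | false, u :: v :: rest => A u v ∧ AltList A M true (v :: rest)

/-- A matching of the subgraph induced on `W`. -/
def IsMatchingOn (R : Roommates V) (W : Set V) (M : V → Option V) : Prop :=
  IsMatching R M ∧ ∀ u v, M u = some v → u ∈ W ∧ v ∈ W

/-- Popularity within the subgraph induced on `W`. -/
def PopularOn (R : Roommates V) (W : Set V) (M : V → Option V) : Prop :=
  ∀ M', IsMatchingOn R W M' →
    {v | v ∈ W ∧ Prefers R M' M v}.ncard ≤ {v | v ∈ W ∧ Prefers R M M' v}.ncard

/-- Stability within the subgraph induced on `W`. -/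
def StableOn (R : Roommates V) (W : Set V) (M : V → Option V) : Prop :=
  ∀ u v, u ∈ W → v ∈ W → ¬ Blocks R M u v

/-- Claim 4, forward direction, labeling part 1: if `P` is a
popular matching, then every edge incident to an uncovered vertex `u` is
labeled `(+,−)` with the `+` at `u`: the other endpoint `v` is matched and
strictly prefers its `P`-partner to `u`. -/
theorem claim4_label1 {V : Type*} [Fintype V] (R : Roommates V)
    (P : V → Option V) (hP : IsMatching R P) (hpop : Popular R P) :
    ∀ u v, P u = none → R.G.Adj u v →
      ∃ w, P v = some w ∧ R.rank v w < R.rank v u := by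
  classical
  intro u v hu hadj
  by_contra hneg
  push_neg at hneg
  have huv : u ≠ v := hadj.ne
  -- M' : match u with v, unmatch v's old partner
  set M' : V → Option V := fun x =>
    if x = u then some v else if x = v then some u
    else if P x = some v then none else P x with hM'def
  have hM'u : M' u = some v := by simp [hM'def]
  have hM'v : M' v = some u := by simp [hM'def, huv.symm]
  have hM' : IsMatching R M' := by
    intro x y hxy
    by_cases hx : x = u
    · subst hx
      rw [hM'u] at hxy
      exact ⟨by simpa [← Option.some_inj.mp hxy] using hadj, by
        rw [← Option.some_inj.mp hxy] at *; exact hM'v⟩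
    by_cases hx' : x = v
    · subst hx'
      rw [hM'v] at hxy
      exact ⟨by simpa [← Option.some_inj.mp hxy] using hadj.symm, by
        rw [← Option.some_inj.mp hxy] at *; exact hM'u⟩
    · have hxv : P x ≠ some v := by
        intro h
        simp [hM'def, hx, hx', h] at hxy
      have hPx : M' x = P x := by simp [hM'def, hx, hx', hxv]
      rw [hPx] at hxy
      obtain ⟨hadjxy, hPy⟩ := hP x y hxy
      have hyu : y ≠ u := by
        intro h; rw [h] at hPy; rw [hu] at hPy; exact nomatch hPy
      have hyv : y ≠ v := by
        intro h; rw [h] at hxy; exact hxv hxy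
      have hyx : P y ≠ some v := by
        intro h; rw [hPy] at h; exact hx' (Option.some_inj.mp h)
      refine ⟨hadjxy, ?_⟩
      simp [hM'def, hyu, hyv, hyx, hPy, hx']
  -- u and v prefer M' to P
  have hpu : Prefers R M' P u := Or.inl ⟨v, hM'u, hu⟩
  have hpv : Prefers R M' P v := by
    cases hPv : P v with
    | none => exact Or.inl ⟨u, hM'v, hPv⟩
    | some w =>
      refine Or.inr ⟨u, w, hM'v, hPv, ?_⟩
      have hle := hneg w hPv
      have hwu : w ≠ u := by
        intro h
        have := (hP v w hPv).2
        rw [h, hu] at this; exact nomatch this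
      have hadjvw : R.G.Adj v w := (hP v w hPv).1
      have hne : R.rank v u ≠ R.rank v w := by
        intro h
        exact hwu (R.rank_inj v u w hadj.symm hadjvw h).symm
      omega
  -- anyone preferring P to M' must have P x = some v
  have hsub : {x | Prefers R P M' x} ⊆ {x | P x = some v} := by
    intro x hx
    by_contra hxv
    simp only [Set.mem_setOf_eq] at hx hxv
    have hxu : x ≠ u := by
      intro h; subst h
      rcases hx with ⟨w, hw, _⟩ | ⟨w, w', hw, _, _⟩ <;>
        (rw [hu] at hw; exact nomatch hw)
    have hxvne : x ≠ v := by
      intro h; subst h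
      rcases hx with ⟨w, hw, h2⟩ | ⟨w, w', hw, hw', hlt⟩
      · rw [hM'v] at h2; exact nomatch h2
      · rw [hM'v] at hw'
        have := hneg w hw
        rw [← Option.some_inj.mp hw'] at hlt
        omega
    have hPx : M' x = P x := by simp [hM'def, hxu, hxvne, hxv]
    rcases hx with ⟨w, hw, h2⟩ | ⟨w, w', hw, hw', hlt⟩
    · rw [hPx, hw] at h2; exact nomatch h2
    · rw [hPx, hw] at hw'
      rw [← Option.some_inj.mp hw'] at hlt
      omega
  -- counting
  have hcount := hpop M' hM'
  have h2 : ({u, v} : Set V) ⊆ {x | Prefers R M' P x} := by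
    intro x hx
    rcases hx with h | h
    · subst h; exact hpu
    · rw [h]; exact hpv
  have hge : 2 ≤ {x | Prefers R M' P x}.ncard := by
    calc 2 = ({u, v} : Set V).ncard := (Set.ncard_pair huv).symm
    _ ≤ _ := Set.ncard_le_ncard h2 (Set.toFinite _)
  have hle1 : {x | Prefers R P M' x}.ncard ≤ 1 := by
    cases hPv : P v with
    | none =>
      have : {x | Prefers R P M' x} ⊆ (∅ : Set V) := by
        intro x hx
        have := hsub hx
        simp only [Set.mem_setOf_eq] at this
        have := (hP x v this).2
        rw [hPv] at this; exact nomatch this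
      have := Set.ncard_le_ncard this (Set.toFinite _)
      exact this.trans (by simp)
    | some w =>
      have hsub2 : {x | Prefers R P M' x} ⊆ ({w} : Set V) := by
        intro x hx
        have hx2 := hsub hx
        simp only [Set.mem_setOf_eq] at hx2
        have := (hP x v hx2).2
        rw [hPv] at this
        simp [Option.some_inj.mp this]
      calc {x | Prefers R P M' x}.ncard ≤ ({w} : Set V).ncard :=
        Set.ncard_le_ncard hsub2 (Set.toFinite _)
      _ = 1 := Set.ncard_singleton w
  omega
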